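/- Let a < b be real numbers, let ν_a and ν_b be positive real numbers, set ν := min{ν_a, ν_b}, and let p be a real number with 1 ≤ p < ∞. Then (∫_ℝ exp(−p·ν_a·(x−a)⁺)·exp(−p·ν_b·(x−b)⁻) dx)^(1/p) ≤ (2/(p·ν) + (b−a))^(1/p) · exp(−ν·(b−a)), where y⁺ := max{y,0} and y⁻ := max{−y,0} for a real number y. -/

import Mathlib

open MeasureTheory

open MeasureTheory Set Real

lemma tail_integrable {c : ℝ} (hc : 0 < c) (b : ℝ) :
    IntegrableOn (fun x : ℝ => Real.exp (-c * (x - b))) (Ioi b) := by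
  have : (fun x : ℝ => Real.exp (-c * (x - b))) =
      fun x => Real.exp (c * b) * Real.exp (-c * x) := by
    funext x; rw [← Real.exp_add]; ring_nf
  rw [this]
  exact (exp_neg_integrableOn_Ioi b hc).const_mul _

lemma tail_integral {c : ℝ} (hc : 0 < c) (b : ℝ) :
    ∫ x in Ioi b, Real.exp (-c * (x - b)) = 1 / c := by
  have hd : ∀ x ∈ Ici b, HasDerivAt (fun x : ℝ => -Real.exp (-c * (x - b)) / c)
      (Real.exp (-c * (x - b))) x := by
    intro x _
    have h1 : HasDerivAt (fun x : ℝ => -c * (x - b)) (-c) x := by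
      simpa using (((hasDerivAt_id x).sub_const b).const_mul (-c))
    have := (h1.exp).neg.div_const c
    convert this using 1
    · rfl
    · rfl
    · rfl
    · field_simp
  have ht : Filter.Tendsto (fun x : ℝ => -Real.exp (-c * (x - b)) / c) Filter.atTop (nhds 0) := by
    have h2 : Filter.Tendsto (fun x : ℝ => -c * (x - b)) Filter.atTop Filter.atBot := by
      apply Filter.Tendsto.const_mul_atTop_of_neg (by linarith)
      exact Filter.tendsto_atTop_add_const_right _ _ Filter.tendsto_id
    have := (Real.tendsto_exp_atBot.comp h2).neg.div_const c
    simpa using this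
  have := integral_Ioi_of_hasDerivAt_of_tendsto' hd (tail_integrable hc b) ht
  rw [this]; simp; field_simp

lemma head_integrable {c : ℝ} (hc : 0 < c) (a : ℝ) :
    IntegrableOn (fun x : ℝ => Real.exp (-c * (a - x))) (Iic a) := by
  have A : MeasurableEmbedding fun x : ℝ => -x :=
    (Homeomorph.neg ℝ).isClosedEmbedding.measurableEmbedding
  have h1 : (volume : Measure ℝ).restrict (Iic a)
      = ((volume : Measure ℝ).restrict (Ici (-a))).map (fun x : ℝ => -x) := by
    rw [← Measure.map_neg_eq_self (volume : Measure ℝ)]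
    rw [Measure.restrict_map A.measurable measurableSet_Iic]
    congr 1
    · simp [neg_preimage, neg_Iic]
  unfold IntegrableOn
  rw [h1, A.integrable_map_iff]
  have : ((fun x : ℝ => Real.exp (-c * (a - x))) ∘ fun x : ℝ => -x)
      = fun x : ℝ => Real.exp (-c * (x - (-a))) := by
    funext x; simp only [Function.comp]; ring_nf
  rw [this]
  have := (tail_integrable hc (-a))
  rwa [← integrableOn_Ici_iff_integrableOn_Ioi] at this

lemma head_integral {c : ℝ} (hc : 0 < c) (a : ℝ) :
    ∫ x in Iic a, Real.exp (-c * (a - x)) = 1 / c := by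
  have h := integral_comp_neg_Ioi (-a) (fun x : ℝ => Real.exp (-c * (a - x)))
  simp only [neg_neg] at h
  rw [← h]
  have : (fun x : ℝ => Real.exp (-c * (a - (-x)))) = fun x => Real.exp (-c * (x - (-a))) := by
    funext x; ring_nf
  calc ∫ x in Ioi (-a), Real.exp (-c * (a - (-x)))
      = ∫ x in Ioi (-a), Real.exp (-c * (x - (-a))) := by
        apply setIntegral_congr_fun measurableSet_Ioi; intro x _; ring_nf
    _ = 1 / c := tail_integral hc (-a)

/-- Elementary interaction estimate: the `L^p` norm of
`exp(-ν_a (x-a)⁺) exp(-ν_b (x-b)⁻)` is at most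
`(2/(p ν) + (b-a))^(1/p) exp(-ν (b-a))` where `ν = min{ν_a, ν_b}`. -/
theorem interaction_lp_estimate (a b νa νb p : ℝ) (hab : a < b)
    (hνa : 0 < νa) (hνb : 0 < νb) (hp : 1 ≤ p) :
    (∫ x : ℝ, Real.exp (-p * νa * max (x - a) 0) * Real.exp (-p * νb * max (-(x - b)) 0))
        ^ ((1 : ℝ) / p)
      ≤ (2 / (p * min νa νb) + (b - a)) ^ ((1 : ℝ) / p)
          * Real.exp (-(min νa νb) * (b - a)) := by
  have hp0 : 0 < p := lt_of_lt_of_le one_pos hp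
  set ν := min νa νb with hνdef
  have hν : 0 < ν := lt_min hνa hνb
  have hνa' : ν ≤ νa := min_le_left _ _
  have hνb' : ν ≤ νb := min_le_right _ _
  set c := p * ν with hcdef
  have hc : 0 < c := mul_pos hp0 hν
  set f : ℝ → ℝ := fun x => Real.exp (-p * νa * max (x - a) 0) *
      Real.exp (-p * νb * max (-(x - b)) 0) with hfdef
  set g : ℝ → ℝ := fun x => Real.exp (-c * max (x - b) 0) *
      Real.exp (-c * max (a - x) 0) with hgdef
  set C := Real.exp (-c * (b - a)) with hCdef
  have hC : 0 < C := Real.exp_pos _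
  -- pointwise bound
  have key : ∀ x : ℝ, f x ≤ C * g x := by
    intro x
    simp only [hfdef, hgdef, hCdef, ← Real.exp_add]
    rw [Real.exp_le_exp]
    rcases le_total x a with hxa | hxa
    · rw [max_eq_right (by linarith : x - a ≤ 0), max_eq_left (by linarith : 0 ≤ -(x - b)),
        max_eq_right (by linarith : x - b ≤ 0), max_eq_left (by linarith : 0 ≤ a - x)]
      nlinarith [mul_le_mul_of_nonneg_right (mul_le_mul_of_nonneg_left hνb' hp0.le)
        (by linarith : (0:ℝ) ≤ b - x)]
    · rcases le_total x b with hxb | hxb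
      · rw [max_eq_left (by linarith : 0 ≤ x - a), max_eq_left (by linarith : 0 ≤ -(x - b)),
          max_eq_right (by linarith : x - b ≤ 0), max_eq_right (by linarith : a - x ≤ 0)]
        nlinarith [mul_le_mul_of_nonneg_right (mul_le_mul_of_nonneg_left hνa' hp0.le)
            (by linarith : (0:ℝ) ≤ x - a),
          mul_le_mul_of_nonneg_right (mul_le_mul_of_nonneg_left hνb' hp0.le)
            (by linarith : (0:ℝ) ≤ b - x)]
      · rw [max_eq_left (by linarith : 0 ≤ x - a), max_eq_right (by linarith : -(x - b) ≤ 0),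
          max_eq_left (by linarith : 0 ≤ x - b), max_eq_right (by linarith : a - x ≤ 0)]
        nlinarith [mul_le_mul_of_nonneg_right (mul_le_mul_of_nonneg_left hνa' hp0.le)
          (by linarith : (0:ℝ) ≤ x - a)]
  -- integrability of g and pieces
  have hgIic : IntegrableOn g (Set.Iic a) := by
    refine (head_integrable hc a).congr_fun (fun x hx => ?_) measurableSet_Iic
    simp only [hgdef]
    rw [max_eq_right (by simp at hx ⊢; linarith : x - b ≤ 0),
      max_eq_left (by simp at hx ⊢; linarith : 0 ≤ a - x)]
    simp
  have hgIoc : IntegrableOn g (Set.Ioc a b) := by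
    have hgc : Continuous g := by
      apply Continuous.mul <;> exact (Real.continuous_exp.comp (by fun_prop))
    exact hgc.integrableOn_Ioc
  have hgIoi : IntegrableOn g (Set.Ioi b) := by
    refine (tail_integrable hc b).congr_fun (fun x hx => ?_) measurableSet_Ioi
    simp only [hgdef]
    rw [max_eq_left (by simp at hx ⊢; linarith : 0 ≤ x - b),
      max_eq_right (by simp at hx ⊢; linarith : a - x ≤ 0)]
    simp
  have hgIicb : IntegrableOn g (Set.Iic b) := by
    rw [← Set.Iic_union_Ioc_eq_Iic hab.le]
    exact hgIic.union hgIoc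
  have hg : Integrable g := by
    rw [← integrableOn_univ, ← Set.Iic_union_Ioi (a := b)]
    exact hgIicb.union hgIoi
  -- value of ∫ g
  have hgval : ∫ x, g x = 2 / c + (b - a) := by
    rw [← intervalIntegral.integral_Iic_add_Ioi hgIicb hgIoi]
    have h1 : ∫ x in Set.Iic b, g x = 1 / c + (b - a) := by
      rw [← Set.Iic_union_Ioc_eq_Iic hab.le,
        setIntegral_union (Set.Iic_disjoint_Ioc le_rfl) measurableSet_Ioc hgIic hgIoc]
      have e1 : ∫ x in Set.Iic a, g x = 1 / c := by
        rw [← head_integral hc a]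
        refine setIntegral_congr_fun measurableSet_Iic (fun x hx => ?_)
        simp only [hgdef]
        rw [max_eq_right (by simp at hx ⊢; linarith : x - b ≤ 0),
          max_eq_left (by simp at hx ⊢; linarith : 0 ≤ a - x)]
        simp
      have e2 : ∫ x in Set.Ioc a b, g x = b - a := by
        have : ∀ x ∈ Set.Ioc a b, g x = 1 := by
          intro x hx
          simp only [hgdef]
          rw [max_eq_right (by linarith [hx.2] : x - b ≤ 0),
            max_eq_right (by linarith [hx.1] : a - x ≤ 0)]
          simp
        rw [setIntegral_congr_fun measurableSet_Ioc this]
        simp [Real.volume_Ioc, ENNReal.toReal_ofReal (by linarith : (0:ℝ) ≤ b - a), hab.le]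
      rw [e1, e2]
    have h2 : ∫ x in Set.Ioi b, g x = 1 / c := by
      rw [← tail_integral hc b]
      refine setIntegral_congr_fun measurableSet_Ioi (fun x hx => ?_)
      simp only [hgdef]
      rw [max_eq_left (by simp at hx ⊢; linarith : 0 ≤ x - b),
        max_eq_right (by simp at hx ⊢; linarith : a - x ≤ 0)]
      simp
    rw [h1, h2]; ring
  -- integrability of f
  have hfc : Continuous f := by
    apply Continuous.mul <;> exact (Real.continuous_exp.comp (by fun_prop))
  have hf : Integrable f := by
    refine (hg.const_mul C).mono' hfc.aestronglyMeasurable ?_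
    filter_upwards with x
    rw [Real.norm_of_nonneg (by positivity)]
    exact key x
  -- integral bound
  have hint : ∫ x, f x ≤ C * (2 / c + (b - a)) := by
    calc ∫ x, f x ≤ ∫ x, C * g x := integral_mono hf (hg.const_mul C) key
      _ = C * ∫ x, g x := integral_const_mul C g
      _ = C * (2 / c + (b - a)) := by rw [hgval]
  -- conclude via rpow
  have hfnn : 0 ≤ ∫ x, f x := integral_nonneg (fun x => by positivity)
  have hstep := Real.rpow_le_rpow hfnn hint (by positivity : (0:ℝ) ≤ 1 / p)
  refine le_trans hstep ?_
  have hT : (0:ℝ) ≤ 2 / c + (b - a) := by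
    have h2c : (0:ℝ) ≤ 2 / c := by positivity
    linarith
  rw [Real.mul_rpow hC.le hT]
  have hCp : C ^ ((1:ℝ)/p) = Real.exp (-ν * (b - a)) := by
    rw [hCdef, show -c * (b - a) = -ν * (b - a) * p by rw [hcdef]; ring, Real.exp_mul,
      ← Real.rpow_mul (Real.exp_pos _).le, mul_one_div, div_self hp0.ne', Real.rpow_one]
  rw [hCp, mul_comm, hcdef]
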